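/- Let G be a symmetric n×n real matrix satisfying the algebraic Riccati equation G·R·G + Q·G + G·Q + P = 0 with diagonal n×n real matrices P, Q, R. Let A, B, C, D be diagonal n×n real matrices with A·D − B·C = 1 (the identity matrix) such that A + B·G is invertible, and set G̃ = (C + D·G)·(A + B·G)⁻¹. Then G̃ satisfies the algebraic Riccati equation G̃·R̃·G̃ + Q̃·G̃ + G̃·Q̃ + P̃ = 0, where P̃ = D²·P − 2·C·D·Q + C²·R, Q̃ = −B·D·P + (A·D + B·C)·Q − A·C·R, and R̃ = B²·P − 2·A·B·Q + A²·R. -/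
import Mathlib

open Matrix

private lemma dmd {n : ℕ} (a b : Fin n → ℝ) (X : Matrix (Fin n) (Fin n) ℝ) :
    diagonal a * (diagonal b * X) = diagonal (fun i => a i * b i) * X := by
  rw [← Matrix.mul_assoc, diagonal_mul_diagonal]

private lemma expand3 {n : ℕ} (G : Matrix (Fin n) (Fin n) ℝ) (x y w u v : Fin n → ℝ) :
    (diagonal x + G * diagonal y) * diagonal w * (diagonal u + diagonal v * G)
    = diagonal (fun i => x i * w i * u i) + diagonal (fun i => x i * w i * v i) * G
      + G * diagonal (fun i => y i * w i * u i)
      + G * (diagonal (fun i => y i * w i * v i) * G) := by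
  simp only [add_mul, mul_add, Matrix.mul_assoc, diagonal_mul_diagonal, dmd]
  abel

private lemma expand2 {n : ℕ} (G : Matrix (Fin n) (Fin n) ℝ) (x y u v : Fin n → ℝ) :
    (diagonal x + G * diagonal y) * (diagonal u + diagonal v * G)
    = diagonal (fun i => x i * u i) + diagonal (fun i => x i * v i) * G
      + G * diagonal (fun i => y i * u i)
      + G * (diagonal (fun i => y i * v i) * G) := by
  simp only [add_mul, mul_add, Matrix.mul_assoc, diagonal_mul_diagonal, dmd]
  abel

theorem stmt8 {n : ℕ} (G P Q R A B C D : Matrix (Fin n) (Fin n) ℝ)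
    (hG : G.IsSymm)
    (hP : P.IsDiag) (hQ : Q.IsDiag) (hR : R.IsDiag)
    (hA : A.IsDiag) (hB : B.IsDiag) (hC : C.IsDiag) (hD : D.IsDiag)
    (hRic : G * R * G + Q * G + G * Q + P = 0)
    (hABCD : A * D - B * C = 1)
    (h : IsUnit (A + B * G))
    (Gt Pt Qt Rt : Matrix (Fin n) (Fin n) ℝ)
    (hGt : Gt = (C + D * G) * (A + B * G)⁻¹)
    (hPt : Pt = D ^ 2 * P - 2 * C * D * Q + C ^ 2 * R)
    (hQt : Qt = -(B * D * P) + (A * D + B * C) * Q - A * C * R)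
    (hRt : Rt = B ^ 2 * P - 2 * A * B * Q + A ^ 2 * R) :
    Gt * Rt * Gt + Qt * Gt + Gt * Qt + Pt = 0 := by
  obtain ⟨p, rfl⟩ : ∃ f, P = diagonal f := ⟨P.diag, hP.diagonal_diag.symm⟩
  obtain ⟨q, rfl⟩ : ∃ f, Q = diagonal f := ⟨Q.diag, hQ.diagonal_diag.symm⟩
  obtain ⟨r, rfl⟩ : ∃ f, R = diagonal f := ⟨R.diag, hR.diagonal_diag.symm⟩
  obtain ⟨a, rfl⟩ : ∃ f, A = diagonal f := ⟨A.diag, hA.diagonal_diag.symm⟩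
  obtain ⟨b, rfl⟩ : ∃ f, B = diagonal f := ⟨B.diag, hB.diagonal_diag.symm⟩
  obtain ⟨c, rfl⟩ : ∃ f, C = diagonal f := ⟨C.diag, hC.diagonal_diag.symm⟩
  obtain ⟨d, rfl⟩ : ∃ f, D = diagonal f := ⟨D.diag, hD.diagonal_diag.symm⟩
  -- pointwise determinant condition
  have had : ∀ i, a i * d i - b i * c i = 1 := by
    intro i
    have h1 : diagonal (fun i => a i * d i - b i * c i)
        = diagonal (fun _ : Fin n => (1 : ℝ)) := by
      rw [diagonal_one]
      rw [← hABCD, diagonal_mul_diagonal, diagonal_mul_diagonal, diagonal_sub]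
    exact congrFun (diagonal_injective h1) i
  set M : Matrix (Fin n) (Fin n) ℝ := diagonal a + diagonal b * G with hM
  set M' : Matrix (Fin n) (Fin n) ℝ := diagonal a + G * diagonal b with hM'
  set N : Matrix (Fin n) (Fin n) ℝ := diagonal c + diagonal d * G with hN
  set N' : Matrix (Fin n) (Fin n) ℝ := diagonal c + G * diagonal d with hN'
  have hMdet : IsUnit M.det := (Matrix.isUnit_iff_isUnit_det M).mp h
  have hM'T : M' = Mᵀ := by
    rw [hM, hM']
    simp [transpose_add, transpose_mul, diagonal_transpose, hG.eq]
  have hM'det : IsUnit M'.det := by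
    rw [hM'T, Matrix.det_transpose]; exact hMdet
  -- key identity M' * N = N' * M
  have hMN : M' * N = N' * M := by
    rw [hM, hM', hN, hN', expand2 G a b c d, expand2 G c d a b]
    have k1 : diagonal (fun i => a i * d i)
        = diagonal (fun i => c i * b i) + 1 := by
      rw [← diagonal_one, diagonal_add]
      exact congrArg diagonal (funext fun i => by linear_combination had i)
    have k2 : diagonal (fun i => b i * c i)
        = diagonal (fun i => d i * a i) - 1 := by
      rw [← diagonal_one, diagonal_sub]
      exact congrArg diagonal (funext fun i => by linear_combination - had i)
    have k3 : (fun i => a i * c i) = fun i => c i * a i := by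
      funext i; ring
    have k4 : (fun i => b i * d i) = fun i => d i * b i := by
      funext i; ring
    rw [k1, k2, k3, k4, add_mul, one_mul, mul_sub, mul_one]
    abel
  have hGtM : Gt * M = N := by
    rw [hGt, Matrix.mul_assoc, Matrix.nonsing_inv_mul M hMdet, Matrix.mul_one]
  have hM'Gt : M' * Gt = N' := by
    rw [hGt, ← Matrix.mul_assoc, hMN, Matrix.mul_assoc,
      Matrix.mul_nonsing_inv M hMdet, Matrix.mul_one]
  -- diagonal forms of the tilde coefficients
  have hPt' : Pt = diagonal (fun i =>
      d i ^ 2 * p i - 2 * c i * d i * q i + c i ^ 2 * r i) := by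
    have h2 : (2 : Matrix (Fin n) (Fin n) ℝ) = diagonal (fun _ => 2) := by
      have : (2 : Matrix (Fin n) (Fin n) ℝ) = 1 + 1 := by norm_num
      rw [this, ← diagonal_one, diagonal_add]; norm_num
    rw [hPt, h2]
    simp only [sq, diagonal_mul_diagonal, diagonal_sub, diagonal_add]
  have hQt' : Qt = diagonal (fun i =>
      -(b i * d i * p i) + (a i * d i + b i * c i) * q i - a i * c i * r i) := by
    rw [hQt]
    simp only [diagonal_mul_diagonal, diagonal_sub, diagonal_add, diagonal_neg]
  have hRt' : Rt = diagonal (fun i =>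
      b i ^ 2 * p i - 2 * a i * b i * q i + a i ^ 2 * r i) := by
    have h2 : (2 : Matrix (Fin n) (Fin n) ℝ) = diagonal (fun _ => 2) := by
      have : (2 : Matrix (Fin n) (Fin n) ℝ) = 1 + 1 := by norm_num
      rw [this, ← diagonal_one, diagonal_add]; norm_num
    rw [hRt, h2]
    simp only [sq, diagonal_mul_diagonal, diagonal_sub, diagonal_add]
  set pt : Fin n → ℝ := fun i => d i ^ 2 * p i - 2 * c i * d i * q i + c i ^ 2 * r i
    with hpt
  set qt : Fin n → ℝ := (fun i =>
    -(b i * d i * p i) + (a i * d i + b i * c i) * q i - a i * c i * r i) with hqt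
  set rt : Fin n → ℝ := fun i => b i ^ 2 * p i - 2 * a i * b i * q i + a i ^ 2 * r i
    with hrt
  -- the central computation
  have key : M' * (Gt * Rt * Gt + Qt * Gt + Gt * Qt + Pt) * M = 0 := by
    rw [hPt', hQt', hRt']
    have t1 : M' * (Gt * diagonal rt * Gt) * M = N' * diagonal rt * N := by
      rw [show M' * (Gt * diagonal rt * Gt) * M
          = (M' * Gt) * diagonal rt * (Gt * M) by noncomm_ring, hM'Gt, hGtM]
    have t2 : M' * (diagonal qt * Gt) * M = M' * diagonal qt * N := by
      rw [show M' * (diagonal qt * Gt) * M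
          = (M' * diagonal qt) * (Gt * M) by noncomm_ring, hGtM, Matrix.mul_assoc]
    have t3 : M' * (Gt * diagonal qt) * M = N' * diagonal qt * M := by
      rw [show M' * (Gt * diagonal qt) * M
          = (M' * Gt) * (diagonal qt * M) by noncomm_ring, hM'Gt, Matrix.mul_assoc]
    have texp : M' * (Gt * diagonal rt * Gt + diagonal qt * Gt + Gt * diagonal qt
        + diagonal pt) * M
        = M' * (Gt * diagonal rt * Gt) * M + M' * (diagonal qt * Gt) * M
          + M' * (Gt * diagonal qt) * M + M' * diagonal pt * M := by
      noncomm_ring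
    rw [texp, t1, t2, t3, hM', hN', hM, hN, expand3 G c d rt c d,
      expand3 G a b qt c d, expand3 G c d qt a b, expand3 G a b pt a b]
    have eC : diagonal (fun i => c i * rt i * c i) + diagonal (fun i => a i * qt i * c i)
        + diagonal (fun i => c i * qt i * a i) + diagonal (fun i => a i * pt i * a i)
        = diagonal p := by
      simp only [diagonal_add]
      refine congrArg diagonal (funext fun i => ?_)
      simp only [hpt, hqt, hrt]
      linear_combination (a i * d i - b i * c i + 1) * p i * had i
    have eL : diagonal (fun i => c i * rt i * d i) + diagonal (fun i => a i * qt i * d i)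
        + diagonal (fun i => c i * qt i * b i) + diagonal (fun i => a i * pt i * b i)
        = diagonal q := by
      simp only [diagonal_add]
      refine congrArg diagonal (funext fun i => ?_)
      simp only [hpt, hqt, hrt]
      linear_combination (a i * d i - b i * c i + 1) * q i * had i
    have eR : diagonal (fun i => d i * rt i * c i) + diagonal (fun i => b i * qt i * c i)
        + diagonal (fun i => d i * qt i * a i) + diagonal (fun i => b i * pt i * a i)
        = diagonal q := by
      simp only [diagonal_add]
      refine congrArg diagonal (funext fun i => ?_)
      simp only [hpt, hqt, hrt]
      linear_combination (a i * d i - b i * c i + 1) * q i * had i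
    have eM2 : diagonal (fun i => d i * rt i * d i) + diagonal (fun i => b i * qt i * d i)
        + diagonal (fun i => d i * qt i * b i) + diagonal (fun i => b i * pt i * b i)
        = diagonal r := by
      simp only [diagonal_add]
      refine congrArg diagonal (funext fun i => ?_)
      simp only [hpt, hqt, hrt]
      linear_combination (a i * d i - b i * c i + 1) * r i * had i
    have group :
        (diagonal (fun i => c i * rt i * c i) + diagonal (fun i => c i * rt i * d i) * G
          + G * diagonal (fun i => d i * rt i * c i)
          + G * (diagonal (fun i => d i * rt i * d i) * G))
        + (diagonal (fun i => a i * qt i * c i) + diagonal (fun i => a i * qt i * d i) * G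
          + G * diagonal (fun i => b i * qt i * c i)
          + G * (diagonal (fun i => b i * qt i * d i) * G))
        + (diagonal (fun i => c i * qt i * a i) + diagonal (fun i => c i * qt i * b i) * G
          + G * diagonal (fun i => d i * qt i * a i)
          + G * (diagonal (fun i => d i * qt i * b i) * G))
        + (diagonal (fun i => a i * pt i * a i) + diagonal (fun i => a i * pt i * b i) * G
          + G * diagonal (fun i => b i * pt i * a i)
          + G * (diagonal (fun i => b i * pt i * b i) * G))
        = (diagonal (fun i => c i * rt i * c i) + diagonal (fun i => a i * qt i * c i)
            + diagonal (fun i => c i * qt i * a i) + diagonal (fun i => a i * pt i * a i))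
          + (diagonal (fun i => c i * rt i * d i) + diagonal (fun i => a i * qt i * d i)
            + diagonal (fun i => c i * qt i * b i) + diagonal (fun i => a i * pt i * b i)) * G
          + G * (diagonal (fun i => d i * rt i * c i) + diagonal (fun i => b i * qt i * c i)
            + diagonal (fun i => d i * qt i * a i) + diagonal (fun i => b i * pt i * a i))
          + G * ((diagonal (fun i => d i * rt i * d i) + diagonal (fun i => b i * qt i * d i)
            + diagonal (fun i => d i * qt i * b i) + diagonal (fun i => b i * pt i * b i)) * G) := by
      noncomm_ring
    rw [group, eC, eL, eR, eM2]
    calc diagonal p + diagonal q * G + G * diagonal q + G * (diagonal r * G)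
        = G * diagonal r * G + diagonal q * G + G * diagonal q + diagonal p := by
          rw [Matrix.mul_assoc]; abel
      _ = 0 := hRic
  calc Gt * Rt * Gt + Qt * Gt + Gt * Qt + Pt
      = (M'⁻¹ * M') * (Gt * Rt * Gt + Qt * Gt + Gt * Qt + Pt) * (M * M⁻¹) := by
        rw [Matrix.nonsing_inv_mul M' hM'det, Matrix.mul_nonsing_inv M hMdet,
          Matrix.one_mul, Matrix.mul_one]
    _ = M'⁻¹ * (M' * (Gt * Rt * Gt + Qt * Gt + Gt * Qt + Pt) * M) * M⁻¹ := by
        simp only [Matrix.mul_assoc]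
    _ = 0 := by rw [key]; simp
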